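/- arXiv:math/0609192 — 3 statements merged into one kernel-verified Lean document; each statement's English description precedes it below -/
import Mathlib

section
/- Let T be a minimal, uniquely ergodic interval exchange transformation on a bounded interval I (with Lebesgue measure μ), and suppose f : I → ℂ is a non-constant differentiable eigenfunction of U_T (f ∘ T = λ f with |λ| = 1) whose derivative lies in L²(I, μ). Then f has the form f(x) = A·exp(C x) for complex constants A ≠ 0 and C purely imaginary, and the translation lengths δ_i of T all lie in a 2-dimensional ℚ-vector subspace of ℝ; in particular T has ℚ-rank 2. -/
open Set Complex MeasureTheory


lemma ae_const_of_dichotomy {μ : Measure ℝ} [IsProbabilityMeasure μ] {u : ℝ → ℝ}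
    (hu : Measurable u)
    (h : ∀ q : ℝ, μ {x | u x ≤ q} = 0 ∨ μ {x | u x ≤ q} = 1) :
    ∃ c : ℝ, ∀ᵐ x ∂μ, u x = c := by
  set S : Set ℝ := {q | μ {x | u x ≤ q} = 1} with hS
  have hmonoset : ∀ {q q' : ℝ}, q ≤ q' → {x | u x ≤ q} ⊆ {x | u x ≤ q'} :=
    fun {q q'} hqq' x hx => le_trans hx hqq'
  have hmeas : ∀ q : ℝ, MeasurableSet {x | u x ≤ q} := fun q => hu measurableSet_Iic
  have hSmono : ∀ {q q' : ℝ}, q ∈ S → q ≤ q' → q' ∈ S := by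
    intro q q' hq hqq'
    rcases h q' with h0 | h1
    · exact absurd (le_trans (hq ▸ measure_mono (hmonoset hqq')) h0.le) (by simp)
    · exact h1
  have hne : S.Nonempty := by
    have hU : (⋃ n : ℕ, {x | u x ≤ (n : ℝ)}) = univ := by
      ext x; simp only [mem_iUnion, mem_univ, iff_true, mem_setOf_eq]
      exact exists_nat_ge (u x)
    by_contra hSne
    rw [Set.not_nonempty_iff_eq_empty] at hSne
    have h0 : ∀ n : ℕ, μ {x | u x ≤ (n : ℝ)} = 0 := by
      intro n
      rcases h n with h0 | h1
      · exact h0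
      · exact absurd (show (n:ℝ) ∈ S from h1) (by simp [hSne])
    have : μ (⋃ n : ℕ, {x | u x ≤ (n : ℝ)}) = 0 := by
      refine le_antisymm (le_trans (measure_iUnion_le _) ?_) (zero_le)
      simp [h0]
    rw [hU, measure_univ] at this
    exact one_ne_zero this
  have hbdd : BddBelow S := by
    have hI : (⋂ n : ℕ, {x | u x ≤ -(n : ℝ)}) = ∅ := by
      ext x; simp only [mem_iInter, mem_empty_iff_false, iff_false, mem_setOf_eq]
      push_neg
      obtain ⟨n, hn⟩ := exists_nat_ge (-u x + 1)
      exact ⟨n, by linarith⟩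
    have hAnt : Antitone (fun n : ℕ => {x | u x ≤ -(n : ℝ)}) := by
      intro n n' hnn'
      exact hmonoset (by exact_mod_cast neg_le_neg (Nat.cast_le.2 hnn'))
    have hinf : (⨅ n : ℕ, μ {x | u x ≤ -(n : ℝ)}) = 0 := by
      rw [← hAnt.measure_iInter (fun n => (hmeas _).nullMeasurableSet)
        ⟨0, (measure_lt_top μ _).ne⟩, hI, measure_empty]
    have : ∃ n : ℕ, μ {x | u x ≤ -(n : ℝ)} = 0 := by
      by_contra hc
      push_neg at hc
      have h1 : ∀ n : ℕ, μ {x | u x ≤ -(n : ℝ)} = 1 := fun n => (h _).resolve_left (hc n)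
      simp [h1] at hinf
    obtain ⟨n, hn⟩ := this
    refine ⟨-(n : ℝ), fun q hq => ?_⟩
    by_contra hlt
    push_neg at hlt
    have : μ {x | u x ≤ q} = 0 :=
      le_antisymm (le_trans (measure_mono (hmonoset hlt.le)) hn.le) (zero_le)
    rw [hS] at hq; simp only [mem_setOf_eq] at hq
    rw [hq] at this; exact one_ne_zero this
  refine ⟨sInf S, ?_⟩
  have hlow : ∀ q : ℝ, q < sInf S → μ {x | u x ≤ q} = 0 := by
    intro q hq
    rcases h q with h0 | h1
    · exact h0
    · exact absurd (csInf_le hbdd h1) (not_le.2 hq)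
  have hhigh : ∀ q : ℝ, sInf S < q → μ {x | u x ≤ q} = 1 := by
    intro q hq
    obtain ⟨s, hsS, hs⟩ := (csInf_lt_iff hbdd hne).1 hq
    exact hSmono hsS hs.le
  have h1 : μ {x | u x < sInf S} = 0 := by
    have hsub : {x | u x < sInf S} ⊆ ⋃ n : ℕ, {x | u x ≤ sInf S - ((n:ℝ)+1)⁻¹} := by
      intro x hx
      simp only [mem_setOf_eq] at hx
      obtain ⟨n, hn⟩ := exists_nat_one_div_lt (show 0 < sInf S - u x by linarith)
      rw [one_div] at hn
      exact mem_iUnion.2 ⟨n, by simp only [mem_setOf_eq]; push_cast; linarith⟩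
    refine le_antisymm (le_trans (measure_mono hsub) ?_) (zero_le)
    refine le_trans (measure_iUnion_le _) ?_
    have : ∀ n : ℕ, μ {x | u x ≤ sInf S - ((n:ℝ)+1)⁻¹} = 0 := by
      intro n
      refine hlow _ ?_
      have : (0:ℝ) < ((n:ℝ)+1)⁻¹ := by positivity
      linarith
    simp [this]
  have h2 : μ {x | sInf S < u x} = 0 := by
    have hsub : {x | sInf S < u x} ⊆ ⋃ n : ℕ, {x | u x ≤ sInf S + ((n:ℝ)+1)⁻¹}ᶜ := by
      intro x hx
      simp only [mem_setOf_eq] at hx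
      obtain ⟨n, hn⟩ := exists_nat_one_div_lt (show 0 < u x - sInf S by linarith)
      rw [one_div] at hn
      refine mem_iUnion.2 ⟨n, ?_⟩
      simp only [mem_compl_iff, mem_setOf_eq, not_le]
      push_cast; linarith
    refine le_antisymm (le_trans (measure_mono hsub) ?_) (zero_le)
    refine le_trans (measure_iUnion_le _) ?_
    have : ∀ n : ℕ, μ {x | u x ≤ sInf S + ((n:ℝ)+1)⁻¹}ᶜ = 0 := by
      intro n
      have hp : sInf S < sInf S + ((n:ℝ)+1)⁻¹ := by
        have : (0:ℝ) < ((n:ℝ)+1)⁻¹ := by positivity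
        linarith
      rw [measure_compl (hmeas _) (measure_lt_top μ _).ne, measure_univ, hhigh _ hp]
      simp
    simp [this]
  have : μ ({x | u x < sInf S} ∪ {x | sInf S < u x}) = 0 :=
    le_antisymm (le_trans (measure_union_le _ _) (by simp [h1, h2])) (zero_le)
  refine (measure_mono_null (fun x hx => ?_) this : μ {x | ¬ u x = sInf S} = 0)
  rcases lt_or_gt_of_ne (hx : ¬ u x = sInf S) with hlt | hgt
  · exact Or.inl hlt
  · exact Or.inr hgt


/-- A minimal, uniquely ergodic IET with a non-constant differentiable
eigenfunction whose derivative is in L² must have eigenfunction of the form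
`A·exp(C x)` with `C` purely imaginary, and the translation lengths lie in a
2-dimensional ℚ-vector subspace of ℝ (ℚ-rank 2). -/
theorem stmt_1 (r : ℝ) (hr : 0 < r) (m : ℕ) (hm : 0 < m)
    (a : ℕ → ℝ) (ha0 : a 0 = 0) (ham : a m = r) (hmono : ∀ i < m, a i < a (i + 1))
    (δ : ℕ → ℝ) (T : ℝ → ℝ)
    (hT : ∀ i < m, ∀ x ∈ Set.Ico (a i) (a (i + 1)), T x = x + δ (i + 1))
    (hbij : Set.BijOn T (Set.Ico 0 r) (Set.Ico 0 r))
    -- minimality: every forward orbit is dense in [0, r)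
    (hmin : ∀ x ∈ Set.Ico (0 : ℝ) r,
      Set.Ico (0 : ℝ) r ⊆ closure {y | ∃ n : ℕ, T^[n] x = y})
    -- unique ergodicity: normalized Lebesgue is the unique invariant probability
    (huniq : ∀ μ : Measure ℝ, IsProbabilityMeasure μ → μ (Set.Ico (0 : ℝ) r)ᶜ = 0 →
      (∀ s : Set ℝ, MeasurableSet s → μ (T ⁻¹' s) = μ s) →
      μ = (ENNReal.ofReal r)⁻¹ • volume.restrict (Set.Ico (0 : ℝ) r))
    (f : ℝ → ℂ) (hdiff : Differentiable ℝ f)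
    (hL2 : MemLp (deriv f) 2 (volume.restrict (Set.Ico (0 : ℝ) r)))
    (lam : ℂ) (hlam : ‖lam‖ = 1)
    (heig : ∀ x ∈ Set.Ico (0 : ℝ) r, f (T x) = lam * f x)
    (hnc : ∃ x ∈ Set.Ico (0 : ℝ) r, ∃ y ∈ Set.Ico (0 : ℝ) r, f x ≠ f y) :
    (∃ (A C : ℂ), A ≠ 0 ∧ C.re = 0 ∧ ∀ x ∈ Set.Ico (0 : ℝ) r, f x = A * Complex.exp (C * x)) ∧
    ∃ V : Submodule ℚ ℝ, Module.rank ℚ V ≤ 2 ∧ ∀ i, 1 ≤ i → i ≤ m → δ i ∈ V := by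
  -- monotonicity of a on [0, m]
  have hmono' : ∀ i j, i ≤ j → j ≤ m → a i ≤ a j := by
    intro i j hij hjm
    induction j with
    | zero => simp_all
    | succ k ih =>
      rcases Nat.lt_or_ge i (k+1) with hik | hik
      · have h1 : a i ≤ a k := ih (Nat.lt_succ_iff.1 hik) (le_trans (Nat.le_succ k) hjm)
        exact le_trans h1 (hmono k (Nat.lt_of_succ_le hjm)).le
      · have : i = k + 1 := le_antisymm hij hik
        simp [this]
  have hsub : ∀ i < m, Ico (a i) (a (i+1)) ⊆ Ico 0 r := by
    intro i him x hx
    exact ⟨le_trans (by rw [← ha0]; exact hmono' 0 i (Nat.zero_le _) him.le) hx.1,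
      lt_of_lt_of_le hx.2 (by rw [← ham]; exact hmono' (i+1) m him (le_refl m))⟩
  have hcover : ∀ x ∈ Ico (0:ℝ) r, ∃ i < m, x ∈ Ico (a i) (a (i+1)) := by
    intro x hx
    have key : ∀ k, k ≤ m → x < a k → ∃ i < k, x ∈ Ico (a i) (a (i+1)) := by
      intro k
      induction k with
      | zero => intro _ h0; rw [ha0] at h0; exact absurd hx.1 (not_le.2 h0)
      | succ k ih =>
        intro hkm hxk
        rcases lt_or_ge x (a k) with h | h
        · obtain ⟨i, hik, hi⟩ := ih (le_trans (Nat.le_succ k) hkm) h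
          exact ⟨i, Nat.lt_succ_of_lt hik, hi⟩
        · exact ⟨k, Nat.lt_succ_self k, ⟨h, hxk⟩⟩
    exact key m le_rfl (ham ▸ hx.2)
  have hdisj : ∀ i j, i < j → j < m → Disjoint (Ico (a i) (a (i+1))) (Ico (a j) (a (j+1))) := by
    intro i j hij hjm
    rw [Set.disjoint_left]
    intro x hxi hxj
    have : a (i+1) ≤ a j := hmono' (i+1) j hij hjm.le
    exact absurd (lt_of_lt_of_le hxi.2 (le_trans this hxj.1)) (lt_irrefl x)
  -- the explicit measurable version of T
  set T' : ℝ → ℝ := fun x =>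
    x + ∑ i ∈ Finset.range m, if x ∈ Ico (a i) (a (i+1)) then δ (i+1) else 0 with hT'def
  have hT'on : ∀ i < m, ∀ x ∈ Ico (a i) (a (i+1)), T' x = x + δ (i+1) := by
    intro i him x hx
    show x + _ = x + δ (i+1)
    congr 1
    rw [Finset.sum_eq_single i]
    · simp [hx]
    · intro j hjm hji
      rw [if_neg]
      intro hxj
      rcases Nat.lt_or_ge j i with h | h
      · exact Set.disjoint_left.1 (hdisj j i h him) hxj hx
      · exact Set.disjoint_left.1 (hdisj i j (lt_of_le_of_ne h (Ne.symm hji)) (Finset.mem_range.1 hjm)) hx hxj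
    · intro hi; exact absurd (Finset.mem_range.2 him) (fun h => hi h)
  have hT'T : ∀ x ∈ Ico (0:ℝ) r, T' x = T x := by
    intro x hx
    obtain ⟨i, him, hxi⟩ := hcover x hx
    rw [hT'on i him x hxi, hT i him x hxi]
  have hT'off : ∀ x, x ∉ Ico (0:ℝ) r → T' x = x := by
    intro x hx
    show x + _ = x
    have : ∀ i ∈ Finset.range m, (if x ∈ Ico (a i) (a (i+1)) then δ (i+1) else 0) = 0 := by
      intro i hi
      rw [if_neg (fun hxi => hx (hsub i (Finset.mem_range.1 hi) hxi))]
    rw [Finset.sum_congr rfl this]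
    simp
  have himg : ∀ i < m, T '' (Ico (a i) (a (i+1))) = Ico (a i + δ (i+1)) (a (i+1) + δ (i+1)) := by
    intro i him
    have : T '' (Ico (a i) (a (i+1))) = (fun x => x + δ (i+1)) '' (Ico (a i) (a (i+1))) :=
      Set.image_congr (fun x hx => hT i him x hx)
    rw [this, Set.image_add_const_Ico]
  have himg_disj : ∀ i j, i < m → j < m → i ≠ j →
      Disjoint (Ico (a i + δ (i+1)) (a (i+1) + δ (i+1))) (Ico (a j + δ (j+1)) (a (j+1) + δ (j+1))) := by
    intro i j him hjm hij
    rw [← himg i him, ← himg j hjm, Set.disjoint_left]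
    rintro z ⟨x, hxi, rfl⟩ ⟨y, hyj, hyx⟩
    have hx0 : x ∈ Ico (0:ℝ) r := hsub i him hxi
    have hy0 : y ∈ Ico (0:ℝ) r := hsub j hjm hyj
    have : y = x := hbij.injOn hy0 hx0 hyx
    subst this
    rcases Nat.lt_or_ge i j with h | h
    · exact Set.disjoint_left.1 (hdisj i j h hjm) hxi hyj
    · exact Set.disjoint_left.1 (hdisj j i (lt_of_le_of_ne h hij.symm) him) hyj hxi
  have hpieces : (⋃ i ∈ Finset.range m, Ico (a i) (a (i+1))) = Ico (0:ℝ) r := by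
    apply Set.Subset.antisymm
    · intro x hx
      simp only [Set.mem_iUnion] at hx
      obtain ⟨i, hi, hxi⟩ := hx
      exact hsub i (Finset.mem_range.1 hi) hxi
    · intro x hx
      obtain ⟨i, him, hxi⟩ := hcover x hx
      exact Set.mem_biUnion (Finset.mem_range.2 him) hxi
  have himg_union : (⋃ i ∈ Finset.range m, Ico (a i + δ (i+1)) (a (i+1) + δ (i+1))) = Ico (0:ℝ) r := by
    have : (⋃ i ∈ Finset.range m, Ico (a i + δ (i+1)) (a (i+1) + δ (i+1)))
        = T '' (⋃ i ∈ Finset.range m, Ico (a i) (a (i+1))) := by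
      rw [Set.image_iUnion₂]
      exact Set.iUnion₂_congr (fun i hi => (himg i (Finset.mem_range.1 hi)).symm)
    rw [this, hpieces, hbij.image_eq]
  have hvol : ∀ s : Set ℝ, MeasurableSet s →
      volume (T' ⁻¹' s ∩ Ico 0 r) = volume (s ∩ Ico 0 r) := by
    intro s hs
    have h1 : T' ⁻¹' s ∩ Ico 0 r = ⋃ i ∈ Finset.range m, ((fun x => x + δ (i+1)) ⁻¹' (s ∩ Ico (a i + δ (i+1)) (a (i+1) + δ (i+1)))) := by
      rw [← hpieces]
      rw [Set.inter_iUnion₂]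
      apply Set.iUnion₂_congr
      intro i hi
      have him := Finset.mem_range.1 hi
      ext x
      simp only [Set.mem_inter_iff, Set.mem_preimage]
      constructor
      · rintro ⟨hxs, hxi⟩
        rw [hT'on i him x hxi] at hxs
        refine ⟨hxs, ?_⟩
        exact ⟨by linarith [hxi.1], by linarith [hxi.2]⟩
      · rintro ⟨hxs, hxI⟩
        have hxi : x ∈ Ico (a i) (a (i+1)) :=
          ⟨le_of_add_le_add_right hxI.1, lt_of_add_lt_add_right hxI.2⟩
        exact ⟨by rwa [hT'on i him x hxi], hxi⟩
    have h2 : s ∩ Ico (0:ℝ) r = ⋃ i ∈ Finset.range m, (s ∩ Ico (a i + δ (i+1)) (a (i+1) + δ (i+1))) := by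
      rw [← himg_union, Set.inter_iUnion₂]
    have hsubA : ∀ i, ((fun x => x + δ (i+1)) ⁻¹' (s ∩ Ico (a i + δ (i+1)) (a (i+1) + δ (i+1))))
        ⊆ Ico (a i) (a (i+1)) := by
      intro i x hx
      exact ⟨le_of_add_le_add_right hx.2.1, lt_of_add_lt_add_right hx.2.2⟩
    rw [h1, h2]
    rw [measure_biUnion_finset ?hd1 ?hm1, measure_biUnion_finset ?hd2 ?hm2]
    case hd1 =>
      intro i hi j hj hij
      rcases Nat.lt_or_ge i j with h | h
      · exact (hdisj i j h (Finset.mem_range.1 hj)).mono (hsubA i) (hsubA j)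
      · exact ((hdisj j i (lt_of_le_of_ne h hij.symm) (Finset.mem_range.1 hi)).mono
          (hsubA j) (hsubA i)).symm
    case hm1 =>
      intro i hi
      exact (measurable_add_const (δ (i+1))) (hs.inter measurableSet_Ico)
    case hd2 =>
      intro i hi j hj hij
      exact (himg_disj i j (Finset.mem_range.1 hi) (Finset.mem_range.1 hj) hij).mono
        Set.inter_subset_right Set.inter_subset_right
    case hm2 =>
      intro i hi
      exact hs.inter measurableSet_Ico
    apply Finset.sum_congr rfl
    intro i hi
    exact measure_preimage_add_right volume (δ (i+1)) _
  have hT'meas : Measurable T' := by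
    apply measurable_id.add
    apply Finset.measurable_sum
    intro i _
    exact Measurable.ite measurableSet_Ico measurable_const measurable_const
  set mu : Measure ℝ := (ENNReal.ofReal r)⁻¹ • volume.restrict (Ico 0 r) with hmudef
  have hofr0 : (ENNReal.ofReal r) ≠ 0 := by
    simp only [ne_eq, ENNReal.ofReal_eq_zero, not_le]; exact hr
  have hofrtop : (ENNReal.ofReal r) ≠ ⊤ := ENNReal.ofReal_ne_top
  have hmuapp : ∀ s : Set ℝ, mu s = (ENNReal.ofReal r)⁻¹ * volume (s ∩ Ico 0 r) := by
    intro s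
    rw [hmudef, Measure.smul_apply, Measure.restrict_apply' measurableSet_Ico, smul_eq_mul]
  haveI hmuprob : IsProbabilityMeasure mu := by
    constructor
    rw [hmuapp, Set.univ_inter, Real.volume_Ico, sub_zero, ENNReal.inv_mul_cancel hofr0 hofrtop]
  have hmucompl : mu (Ico (0:ℝ) r)ᶜ = 0 := by
    rw [hmuapp, Set.compl_inter_self, measure_empty, mul_zero]
  have hmuT' : ∀ s : Set ℝ, MeasurableSet s → mu (T' ⁻¹' s) = mu s := by
    intro s hs
    rw [hmuapp, hmuapp, hvol s hs]
  have hdich : ∀ A : Set ℝ, MeasurableSet A → A ⊆ Ico (0:ℝ) r → T' ⁻¹' A = A →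
      mu A = 0 ∨ mu A = 1 := by
    intro A hA hAsub hAinv
    by_cases h0 : mu A = 0
    · exact Or.inl h0
    right
    have hmuAtop : mu A ≠ ⊤ := (measure_lt_top mu A).ne
    set ν : Measure ℝ := (mu A)⁻¹ • mu.restrict A with hνdef
    have hνapp : ∀ s : Set ℝ, ν s = (mu A)⁻¹ * mu (s ∩ A) := by
      intro s
      rw [hνdef, Measure.smul_apply, Measure.restrict_apply' hA, smul_eq_mul]
    haveI hνprob : IsProbabilityMeasure ν := by
      constructor
      rw [hνapp, Set.univ_inter, ENNReal.inv_mul_cancel h0 hmuAtop]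
    have hνcompl : ν (Ico (0:ℝ) r)ᶜ = 0 := by
      rw [hνapp]
      have : (Ico (0:ℝ) r)ᶜ ∩ A = ∅ := by
        apply Set.eq_empty_of_forall_notMem
        rintro x ⟨hxc, hxA⟩
        exact hxc (hAsub hxA)
      rw [this, measure_empty, mul_zero]
    have hνinv : ∀ s : Set ℝ, MeasurableSet s → ν (T ⁻¹' s) = ν s := by
      intro s hs
      rw [hνapp, hνapp]
      congr 1
      have hTT' : T ⁻¹' s ∩ A = T' ⁻¹' (s ∩ A) := by
        ext x
        constructor
        · rintro ⟨hxs, hxA⟩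
          have hx0 := hAsub hxA
          have hT'A : T' x ∈ A := by rw [← hAinv] at hxA; exact hxA
          exact ⟨show T' x ∈ s by rwa [hT'T x hx0], hT'A⟩
        · rintro ⟨hxs, hxA⟩
          have hxA' : x ∈ A := by rw [← hAinv]; exact hxA
          have hx0 := hAsub hxA'
          exact ⟨show T x ∈ s by rwa [← hT'T x hx0], hxA'⟩
      rw [hTT', hmuT' _ (hs.inter hA)]
    have huniqν := huniq ν hνprob hνcompl hνinv
    have hνA : ν A = 1 := by
      rw [hνapp, Set.inter_self, ENNReal.inv_mul_cancel h0 hmuAtop]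
    rw [← huniqν, hνA]
  -- orbit stays in the interval
  have horb : ∀ (n : ℕ) (x : ℝ), x ∈ Ico (0:ℝ) r → T^[n] x ∈ Ico (0:ℝ) r := by
    intro n
    induction n with
    | zero => intro x hx; simpa using hx
    | succ n ih =>
      intro x hx
      rw [Function.iterate_succ_apply']
      exact hbij.mapsTo (ih x hx)
  have h0mem : (0:ℝ) ∈ Ico (0:ℝ) r := ⟨le_refl 0, hr⟩
  have hlam0 : lam ≠ 0 := by
    intro h; rw [h] at hlam; simp at hlam
  -- |f| is constant on [0, r)
  have habs : ∀ y ∈ Ico (0:ℝ) r, ‖f y‖ = ‖f 0‖ := by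
    intro y hy
    have hC : IsClosed {z : ℝ | ‖f z‖ = ‖f 0‖} :=
      isClosed_eq (continuous_norm.comp hdiff.continuous) continuous_const
    have horbC : {y | ∃ n : ℕ, T^[n] (0:ℝ) = y} ⊆ {z : ℝ | ‖f z‖ = ‖f 0‖} := by
      rintro z ⟨n, rfl⟩
      induction n with
      | zero => simp
      | succ n ih =>
        rw [Function.iterate_succ_apply', mem_setOf_eq, heig _ (horb n 0 h0mem), norm_mul, hlam,
          one_mul]
        exact ih
    have := hmin 0 h0mem hy
    exact (hC.closure_subset_iff.2 horbC) this
  have hf0 : f 0 ≠ 0 := by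
    intro h
    obtain ⟨x, hx, y, hy, hxy⟩ := hnc
    have hz : ∀ z ∈ Ico (0:ℝ) r, f z = 0 := by
      intro z hz
      have := habs z hz
      rw [h, norm_zero] at this
      exact norm_eq_zero.1 this
    exact hxy ((hz x hx).trans (hz y hy).symm)
  have hfne : ∀ x ∈ Ico (0:ℝ) r, f x ≠ 0 := by
    intro x hx h
    apply hf0
    have := habs x hx
    rw [h, norm_zero] at this
    exact norm_eq_zero.1 this.symm
  -- the eigenvalue relation for the derivative
  have hderiv_eig : ∀ x ∈ Ico (0:ℝ) r, deriv f (T x) = lam * deriv f x := by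
    intro x hx
    obtain ⟨i, him, hxi⟩ := hcover x hx
    set d := δ (i+1) with hd
    set s : Set ℝ := Ico x (a (i+1)) with hsdef
    have hxs : x ∈ s := ⟨le_refl x, hxi.2⟩
    have hssub : s ⊆ Ico (a i) (a (i+1)) := fun z hz => ⟨le_trans hxi.1 hz.1, hz.2⟩
    have hF1 : HasDerivAt (fun z : ℝ => f (z + d)) (deriv f (x + d)) x :=
      HasDerivAt.comp_add_const x d (hdiff (x + d)).hasDerivAt
    have hEq : ∀ z ∈ s, lam * f z = f (z + d) := by
      intro z hz
      rw [← hT i him z (hssub hz), heig z (hsub i him (hssub hz))]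
    have hF2' : HasDerivWithinAt (fun z : ℝ => lam * f z) (deriv f (x + d)) s x :=
      (hF1.hasDerivWithinAt).congr hEq (hEq x hxs)
    have hF2 : HasDerivWithinAt (fun z : ℝ => lam * f z) (lam * deriv f x) s x :=
      ((hdiff x).hasDerivAt.const_mul lam).hasDerivWithinAt
    have hu : UniqueDiffWithinAt ℝ s x := (uniqueDiffOn_Ico x (a (i+1))) x hxs
    have := (hF2'.derivWithin hu).symm.trans (hF2.derivWithin hu)
    rw [hT i him x hxi, ← hd, this]
  -- the logarithmic derivative is invariant
  set g : ℝ → ℂ := fun x => deriv f x / f x with hgdef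
  have hginv : ∀ x : ℝ, g (T' x) = g x := by
    intro x
    by_cases hx : x ∈ Ico (0:ℝ) r
    · rw [hT'T x hx, hgdef]
      show deriv f (T x) / f (T x) = deriv f x / f x
      rw [hderiv_eig x hx, heig x hx, mul_div_mul_left _ _ hlam0]
    · rw [hT'off x hx]
  have hgmeas : Measurable g := (measurable_deriv f).div hdiff.continuous.measurable
  -- invariant measurable real functions are a.e. constant
  have hudich : ∀ u : ℝ → ℝ, Measurable u → (∀ x, u (T' x) = u x) →
      ∃ c : ℝ, ∀ᵐ x ∂mu, u x = c := by
    intro u humeas huinv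
    apply ae_const_of_dichotomy humeas
    intro q
    set A : Set ℝ := Ico (0:ℝ) r ∩ {x | u x ≤ q} with hAdef
    have hAmeas : MeasurableSet A := measurableSet_Ico.inter (humeas measurableSet_Iic)
    have hAinv : T' ⁻¹' A = A := by
      ext x
      by_cases hx : x ∈ Ico (0:ℝ) r
      · have hTx : T' x ∈ Ico (0:ℝ) r := by rw [hT'T x hx]; exact hbij.mapsTo hx
        simp only [mem_preimage, hAdef, mem_inter_iff, mem_setOf_eq, huinv x]
        tauto
      · rw [mem_preimage, hT'off x hx]
    have hseteq : {x | u x ≤ q} ∩ Ico (0:ℝ) r = A ∩ Ico (0:ℝ) r := by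
      rw [hAdef]; ext z; simp only [mem_inter_iff, mem_setOf_eq]; tauto
    have hmueq : mu {x | u x ≤ q} = mu A := by
      rw [hmuapp, hmuapp, hseteq]
    rw [hmueq]
    exact hdich A hAmeas Set.inter_subset_left hAinv
  obtain ⟨cre, hcre⟩ := hudich (fun x => (g x).re) (Complex.measurable_re.comp hgmeas)
    (fun x => congrArg Complex.re (hginv x))
  obtain ⟨cim, hcim⟩ := hudich (fun x => (g x).im) (Complex.measurable_im.comp hgmeas)
    (fun x => congrArg Complex.im (hginv x))
  set c : ℂ := (cre : ℂ) + (cim : ℂ) * Complex.I with hcdef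
  have hmuIco : ∀ᵐ x ∂mu, x ∈ Ico (0:ℝ) r := by
    rw [MeasureTheory.ae_iff]
    exact hmucompl
  have hgc : ∀ᵐ x ∂mu, deriv f x = c * f x := by
    filter_upwards [hcre, hcim, hmuIco] with x h1 h2 h3
    have hgx : g x = c := by
      rw [hcdef]
      apply Complex.ext <;> simp [h1, h2]
    have := hfne x h3
    rw [← hgx, hgdef]
    field_simp
  -- transfer the a.e. statement to restricted Lebesgue measure on [0, r]
  have hinvne : ((ENNReal.ofReal r)⁻¹ : ENNReal) ≠ 0 := ENNReal.inv_ne_zero.2 hofrtop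
  have haeIcc : ∀ᵐ x ∂(volume.restrict (Icc (0:ℝ) r)), deriv f x = c * f x := by
    have h1 : ∀ᵐ x ∂(volume.restrict (Ico (0:ℝ) r)), deriv f x = c * f x :=
      (Measure.ae_ennreal_smul_measure_iff hinvne).1 hgc
    rwa [Measure.restrict_congr_set Ico_ae_eq_Icc] at h1
  haveI : IsFiniteMeasure (volume.restrict (Ico (0:ℝ) r)) := by
    constructor
    rw [Measure.restrict_apply_univ, Real.volume_Ico]
    exact ENNReal.ofReal_lt_top
  have hint : Integrable (deriv f) (volume.restrict (Ico (0:ℝ) r)) :=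
    hL2.integrable (by norm_num : (1:ENNReal) ≤ 2)
  have hintIcc : IntegrableOn (deriv f) (Icc (0:ℝ) r) volume := by
    show Integrable (deriv f) (volume.restrict (Icc (0:ℝ) r))
    rwa [← Measure.restrict_congr_set Ico_ae_eq_Icc]
  have hFTC : ∀ x ∈ Icc (0:ℝ) r, (∫ t in (0:ℝ)..x, deriv f t) = f x - f 0 := by
    intro x hx
    apply intervalIntegral.integral_eq_sub_of_hasDerivAt
    · intro t _; exact (hdiff t).hasDerivAt
    · rw [intervalIntegrable_iff]
      apply hintIcc.mono_set
      rw [uIoc_of_le hx.1]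
      exact Ioc_subset_Icc_self.trans (Icc_subset_Icc le_rfl hx.2)
  have hae' : ∀ᵐ t ∂(volume : Measure ℝ), t ∈ Icc (0:ℝ) r → deriv f t = c * f t :=
    (ae_restrict_iff' measurableSet_Icc).1 haeIcc
  have hcongr : ∀ x ∈ Icc (0:ℝ) r,
      (∫ t in (0:ℝ)..x, deriv f t) = ∫ t in (0:ℝ)..x, c * f t := by
    intro x hx
    apply intervalIntegral.integral_congr_ae
    filter_upwards [hae'] with t h1 h2
    apply h1
    rw [uIoc_of_le hx.1] at h2
    exact (Ioc_subset_Icc_self.trans (Icc_subset_Icc le_rfl hx.2)) h2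
  set G : ℝ → ℂ := fun x => f 0 + ∫ t in (0:ℝ)..x, c * f t with hGdef
  have hfG : ∀ x ∈ Icc (0:ℝ) r, f x = G x := by
    intro x hx
    show f x = f 0 + _
    rw [← hcongr x hx, hFTC x hx]; ring
  have hGd : ∀ x : ℝ, HasDerivAt G (c * f x) x := by
    intro x
    have hcont : Continuous (fun t : ℝ => c * f t) := continuous_const.mul hdiff.continuous
    have h1 := intervalIntegral.integral_hasDerivAt_right
      (hcont.intervalIntegrable 0 x) (hcont.stronglyMeasurableAtFilter volume (nhds x))
      hcont.continuousAt
    exact h1.const_add (f 0)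
  have hofReal : ∀ x : ℝ, HasDerivAt (fun y : ℝ => (y : ℂ)) 1 x := by
    intro x
    exact Complex.ofRealCLM.hasDerivAt (x := x)
  have hexp : ∀ x : ℝ, HasDerivAt (fun y : ℝ => Complex.exp (-(c * y)))
      (Complex.exp (-(c * x)) * (-c)) x := by
    intro x
    have h1 : HasDerivAt (fun y : ℝ => -(c * (y : ℂ))) (-c) x := by
      have h := ((hofReal x).const_mul c).neg; rw [mul_one] at h; exact h
    exact h1.cexp
  set ψ : ℝ → ℂ := fun x => G x * Complex.exp (-(c * x)) with hψdef
  have hψd : ∀ x ∈ Icc (0:ℝ) r, HasDerivAt ψ 0 x := by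
    intro x hx
    have h1 := (hGd x).mul (hexp x)
    refine h1.congr_deriv ?_
    rw [← hfG x hx]
    ring
  have hψconst : ∀ x ∈ Icc (0:ℝ) r, ψ x = ψ 0 := by
    apply constant_of_has_deriv_right_zero
    · have hGc : Continuous G := by
        have hd : Differentiable ℝ G := fun x => (hGd x).differentiableAt
        exact hd.continuous
      have hec : Continuous (fun y : ℝ => Complex.exp (-(c * y))) := by
        have hd : Differentiable ℝ (fun y : ℝ => Complex.exp (-(c * y))) :=
          fun x => (hexp x).differentiableAt
        exact hd.continuous
      exact (hGc.mul hec).continuousOn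
    · intro x hx
      exact (hψd x (mem_Icc_of_Ico hx)).hasDerivWithinAt
  have hψ0 : ψ 0 = f 0 := by
    show G 0 * Complex.exp (-(c * (0:ℝ))) = f 0
    have : G 0 = f 0 := by
      show f 0 + _ = f 0
      rw [intervalIntegral.integral_same]; ring
    rw [this]
    push_cast
    rw [mul_zero, neg_zero, Complex.exp_zero, mul_one]
  have hform : ∀ x ∈ Icc (0:ℝ) r, f x = f 0 * Complex.exp (c * x) := by
    intro x hx
    have h1 := hψconst x hx
    rw [hψ0] at h1
    have h1' : G x * Complex.exp (-(c * (x:ℂ))) = f 0 := h1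
    have h2 : G x = f 0 * Complex.exp (c * x) := by
      have he : Complex.exp (-(c * (x:ℂ))) * Complex.exp (c * (x:ℂ)) = 1 := by
        rw [← Complex.exp_add]; simp
      calc G x = G x * (Complex.exp (-(c * (x:ℂ))) * Complex.exp (c * (x:ℂ))) := by
            rw [he, mul_one]
        _ = (G x * Complex.exp (-(c * (x:ℂ)))) * Complex.exp (c * (x:ℂ)) := by ring
        _ = f 0 * Complex.exp (c * x) := by rw [h1']
    rw [hfG x hx, h2]
  have hformIco : ∀ x ∈ Ico (0:ℝ) r, f x = f 0 * Complex.exp (c * x) :=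
    fun x hx => hform x (Ico_subset_Icc_self hx)
  have habs0 : ‖f 0‖ ≠ 0 := by
    simpa using hf0
  have hcre0 : c.re = 0 := by
    have hx2 : (r/2) ∈ Ico (0:ℝ) r := ⟨by positivity, by linarith⟩
    have h1 := habs (r/2) hx2
    rw [hformIco _ hx2, norm_mul, Complex.norm_exp] at h1
    have h2 : Real.exp ((c * ((r:ℝ)/2 : ℝ)).re) = 1 :=
      mul_left_cancel₀ habs0 (by rw [mul_one]; exact h1)
    rw [← Real.exp_zero, Real.exp_eq_exp] at h2
    have h3 : (c * ((r:ℝ)/2 : ℝ)).re = c.re * (r/2) := by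
      simp [Complex.mul_re]
    rw [h3] at h2
    have : r/2 ≠ 0 := by positivity
    exact (mul_eq_zero.1 h2).resolve_right this
  have hc0 : c ≠ 0 := by
    intro h
    obtain ⟨x, hx, y, hy, hxy⟩ := hnc
    apply hxy
    rw [hformIco x hx, hformIco y hy, h]
    simp
  have hexp_eig : ∀ i, 1 ≤ i → i ≤ m → Complex.exp (c * (δ i : ℝ)) = lam := by
    intro i hi1 him
    obtain ⟨j, rfl⟩ : ∃ j, i = j + 1 := ⟨i - 1, (Nat.succ_pred_eq_of_pos hi1).symm⟩
    have hjm : j < m := him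
    have hxj : a j ∈ Ico (a j) (a (j+1)) := ⟨le_rfl, hmono j hjm⟩
    have hx0 : a j ∈ Ico (0:ℝ) r := hsub j hjm hxj
    have hTx : T (a j) ∈ Ico (0:ℝ) r := hbij.mapsTo hx0
    have heq := heig (a j) hx0
    rw [hT j hjm (a j) hxj] at heq hTx
    rw [hformIco _ hTx, hformIco _ hx0] at heq
    have hcast : ((a j + δ (j+1) : ℝ) : ℂ) = ((a j : ℝ) : ℂ) + ((δ (j+1) : ℝ) : ℂ) := by
      push_cast; ring
    rw [hcast] at heq
    have hexpand : f 0 * Complex.exp (c * (((a j : ℝ) : ℂ) + ((δ (j+1) : ℝ) : ℂ)))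
        = (f 0 * Complex.exp (c * ((a j : ℝ) : ℂ))) * Complex.exp (c * ((δ (j+1) : ℝ) : ℂ)) := by
      rw [mul_add, Complex.exp_add]; ring
    rw [hexpand] at heq
    have hne1 : f 0 * Complex.exp (c * ((a j : ℝ) : ℂ)) ≠ 0 :=
      mul_ne_zero hf0 (Complex.exp_ne_zero _)
    exact mul_left_cancel₀ hne1 (heq.trans (mul_comm lam _))
  set θ : ℝ := c.im with hθdef
  have hθ0 : θ ≠ 0 := by
    intro h
    exact hc0 (Complex.ext hcre0 h)
  set w : ℝ := 2 * Real.pi / θ with hwdef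
  constructor
  · exact ⟨f 0, c, hf0, hcre0, hformIco⟩
  refine ⟨Submodule.span ℚ ({δ 1, w} : Set ℝ), ?_, ?_⟩
  · refine le_trans (rank_span_le _) ?_
    refine le_trans (Cardinal.mk_insert_le) ?_
    rw [Cardinal.mk_singleton]
    norm_num
  · intro i hi1 him
    have hδ1 : δ 1 ∈ Submodule.span ℚ ({δ 1, w} : Set ℝ) :=
      Submodule.subset_span (by simp)
    have hw : w ∈ Submodule.span ℚ ({δ 1, w} : Set ℝ) :=
      Submodule.subset_span (by simp)
    have h1 := hexp_eig i hi1 him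
    have h2 := hexp_eig 1 le_rfl hm
    have h3 : Complex.exp (c * (δ i : ℝ)) = Complex.exp (c * (δ 1 : ℝ)) := h1.trans h2.symm
    obtain ⟨k, hk⟩ := Complex.exp_eq_exp_iff_exists_int.1 h3
    have him' := congrArg Complex.im hk
    have h4 : θ * δ i = θ * δ 1 + (k : ℝ) * (2 * Real.pi) := by
      simpa [Complex.mul_im, Complex.add_im, hcre0, hθdef] using him'
    have h5 : δ i = δ 1 + (k : ℝ) * w := by
      rw [hwdef]
      field_simp
      nlinarith [h4]
    rw [h5]
    refine Submodule.add_mem _ hδ1 ?_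
    have : (k : ℝ) * w = (k : ℤ) • w := by rw [zsmul_eq_mul]
    rw [this]
    exact zsmul_mem hw k
end

section
/- Let n ≥ 1, σ an n-cycle of {1,...,n}, α ∈ (0,1) irrational, and T the 2n-interval exchange on [0,n) defined by T(x) = x + 1 − α + σ(i) − i for x ∈ [i−1, i−1+α) and T(x) = x − α + σ(i) − i for x ∈ [i−1+α, i). Then the first return map of T to [0,1) is the rotation x ↦ x + n(1−α) (mod 1), and T is minimal. -/
section Aux

lemma key_pos (η : ℝ) (hη : 0 < η) (d : ℝ) : ∃ (j : ℕ) (l : ℤ), |d - j*η - l| < η := by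
  set l : ℤ := ⌊d⌋ - 1 with hl
  have h1 : (1:ℝ) ≤ d - l := by
    push_cast [hl]
    have := Int.floor_le d
    linarith
  have hq : (0:ℝ) ≤ (d - l)/η := by positivity
  have hfl : (0:ℤ) ≤ ⌊(d - l)/η⌋ := Int.floor_nonneg.mpr hq
  set j : ℕ := (⌊(d - l)/η⌋).toNat with hj
  have hjc : (j:ℝ) = (⌊(d - l)/η⌋ : ℤ) := by
    rw [hj]
    exact_mod_cast congrArg (fun z : ℤ => (z : ℝ)) (Int.toNat_of_nonneg hfl)
  have h2 : (j:ℝ) ≤ (d - l)/η := by rw [hjc]; exact Int.floor_le _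
  have h3 : (d - l)/η < j + 1 := by rw [hjc]; exact Int.lt_floor_add_one _
  have h2' : (j:ℝ) * η ≤ d - l := by
    have := mul_le_mul_of_nonneg_right h2 hη.le
    rwa [div_mul_cancel₀] at this; exact hη.ne'
  have h3' : d - l < (j+1) * η := by
    have := mul_lt_mul_of_pos_right h3 hη
    rwa [div_mul_cancel₀] at this; exact hη.ne'
  refine ⟨j, l, ?_⟩
  rw [abs_lt]; constructor <;> nlinarith

lemma key_step (η : ℝ) (hη : η ≠ 0) (d : ℝ) : ∃ (j : ℕ) (l : ℤ), |d - j*η - l| < |η| := by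
  rcases hη.lt_or_gt with h | h
  · obtain ⟨j, l, hjl⟩ := key_pos (-η) (by linarith) (-d)
    refine ⟨j, -l, ?_⟩
    rw [abs_of_neg h]
    calc |d - j*η - ((-l:ℤ):ℝ)| = |(-d) - j*(-η) - l| := by rw [← abs_neg]; push_cast; ring_nf
    _ < -η := hjl
  · obtain ⟨j, l, hjl⟩ := key_pos η h d
    exact ⟨j, l, by rwa [abs_of_pos h]⟩

variable (n : ℕ) (σ : ℕ → ℕ)

lemma iter_mem (hσ : Set.BijOn σ (Set.Icc 1 n) (Set.Icc 1 n)) :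
    ∀ k, ∀ i ∈ Set.Icc 1 n, σ^[k] i ∈ Set.Icc 1 n := by
  intro k
  induction k with
  | zero => intro i hi; simpa using hi
  | succ k ih =>
    intro i hi
    rw [Function.iterate_succ_apply']
    exact hσ.mapsTo (ih i hi)

lemma iter_inj (hσ : Set.BijOn σ (Set.Icc 1 n) (Set.Icc 1 n)) :
    ∀ k, Set.InjOn σ^[k] (Set.Icc 1 n) := by
  intro k
  induction k with
  | zero => intro a _ b _ h; simpa using h
  | succ k ih =>
    intro a ha b hb h
    rw [Function.iterate_succ_apply', Function.iterate_succ_apply'] at h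
    exact ih ha hb (hσ.injOn (iter_mem n σ hσ k a ha) (iter_mem n σ hσ k b hb) h)

lemma per_mul {d : ℕ} (hd : σ^[d] 1 = 1) : ∀ q, σ^[d*q] 1 = 1 := by
  intro q
  induction q with
  | zero => simp
  | succ q ih =>
    have h : d * (q+1) = d * q + d := by ring
    rw [h, Function.iterate_add_apply, hd, ih]

lemma per_mod {d : ℕ} (hd : σ^[d] 1 = 1) (k : ℕ) : σ^[k] 1 = σ^[k % d] 1 := by
  conv_lhs => rw [← Nat.mod_add_div k d]
  rw [Function.iterate_add_apply, per_mul σ hd]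

lemma per_lb (hn : 1 ≤ n)
    (hcyc : ∀ j ∈ Set.Icc 1 n, ∃ k : ℕ, σ^[k] 1 = j)
    {d : ℕ} (hd1 : 1 ≤ d) (hd : σ^[d] 1 = 1) : n ≤ d := by
  have hsub : Finset.Icc 1 n ⊆ Finset.image (fun r => σ^[r] 1) (Finset.range d) := by
    intro j hj
    obtain ⟨k, hk⟩ := hcyc j (by simpa using hj)
    rw [Finset.mem_image]
    exact ⟨k % d, Finset.mem_range.mpr (Nat.mod_lt k hd1), by rw [← per_mod σ hd, hk]⟩
  calc n = (Finset.Icc 1 n).card := by rw [Nat.card_Icc]; omega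
  _ ≤ _ := Finset.card_le_card hsub
  _ ≤ d := le_trans (Finset.card_image_le) (by simp)

lemma per_n (hn : 1 ≤ n) (hσ : Set.BijOn σ (Set.Icc 1 n) (Set.Icc 1 n))
    (hcyc : ∀ j ∈ Set.Icc 1 n, ∃ k : ℕ, σ^[k] 1 = j) : σ^[n] 1 = 1 := by
  have h1 : (1 : ℕ) ∈ Set.Icc 1 n := ⟨le_refl 1, hn⟩
  have main : ∀ k1 k2 : ℕ, k1 < k2 → k2 ≤ n → σ^[k1] 1 = σ^[k2] 1 → σ^[n] 1 = 1 := by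
    intro k1 k2 hlt hle heq
    set d := k2 - k1 with hdd
    have hk2 : k2 = k1 + d := by omega
    rw [hk2, Function.iterate_add_apply] at heq
    have hmem : σ^[d] 1 ∈ Set.Icc 1 n := iter_mem n σ hσ d 1 h1
    have hd1 : σ^[d] 1 = 1 := (iter_inj n σ hσ k1 hmem h1 heq.symm)
    have hlb : n ≤ d := per_lb n σ hn hcyc (by omega) hd1
    have : d = n := by omega
    rw [← this]; exact hd1
  have hmaps : ∀ k ∈ Finset.range (n+1), σ^[k] 1 ∈ Finset.Icc 1 n := by
    intro k _
    have := iter_mem n σ hσ k 1 h1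
    simpa using this
  have hcard : (Finset.Icc 1 n).card < (Finset.range (n+1)).card := by
    rw [Nat.card_Icc, Finset.card_range]; omega
  obtain ⟨k1, hk1, k2, hk2, hne, heq⟩ :=
    Finset.exists_ne_map_eq_of_card_lt_of_maps_to hcard hmaps
  rcases hne.lt_or_gt with h | h
  · exact main k1 k2 h (by simpa using Nat.lt_succ_iff.mp (Finset.mem_range.mp hk2)) heq
  · exact main k2 k1 h (by simpa using Nat.lt_succ_iff.mp (Finset.mem_range.mp hk1)) heq.symm

lemma per_ne (hn : 1 ≤ n)
    (hcyc : ∀ j ∈ Set.Icc 1 n, ∃ k : ℕ, σ^[k] 1 = j)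
    {k : ℕ} (hk1 : 1 ≤ k) (hkn : k < n) : σ^[k] 1 ≠ 1 := by
  intro h
  have := per_lb n σ hn hcyc hk1 h
  omega

variable (α : ℝ) (T : ℝ → ℝ)

lemma T_step (hα : α ∈ Set.Ioo (0:ℝ) 1)
    (hT : ∀ i ∈ Set.Icc 1 n, ∀ x ∈ Set.Ico ((i : ℝ) - 1) (i : ℝ),
      T x = if x < (i : ℝ) - 1 + α then x + 1 - α + (σ i : ℝ) - (i : ℝ)
            else x - α + (σ i : ℝ) - (i : ℝ)) :
    ∀ j ∈ Set.Icc 1 n, ∀ s : ℝ, 0 ≤ s → s < 1 →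
      T ((j:ℝ) - 1 + s) = ((σ j : ℕ):ℝ) - 1 + Int.fract (s - α) := by
  intro j hj s hs0 hs1
  obtain ⟨hα0, hα1⟩ := hα
  have hx : ((j:ℝ) - 1 + s) ∈ Set.Ico ((j:ℝ) - 1) (j:ℝ) := by
    constructor <;> [linarith; linarith]
  rw [hT j hj _ hx]
  by_cases h : s < α
  · rw [if_pos (by linarith)]
    have hfloor : ⌊s - α⌋ = -1 := by
      rw [Int.floor_eq_iff]
      push_cast
      constructor <;> linarith
    have : Int.fract (s - α) = s - α + 1 := by
      rw [Int.fract, hfloor]; push_cast; ring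
    rw [this]; ring
  · rw [if_neg (by push_neg at h ⊢; linarith)]
    have : Int.fract (s - α) = s - α := by
      rw [Int.fract_eq_self]
      constructor <;> [linarith [not_lt.mp h]; linarith]
    rw [this]; ring

lemma T_iter (hα : α ∈ Set.Ioo (0:ℝ) 1)
    (hσ : Set.BijOn σ (Set.Icc 1 n) (Set.Icc 1 n))
    (hT : ∀ i ∈ Set.Icc 1 n, ∀ x ∈ Set.Ico ((i : ℝ) - 1) (i : ℝ),
      T x = if x < (i : ℝ) - 1 + α then x + 1 - α + (σ i : ℝ) - (i : ℝ)
            else x - α + (σ i : ℝ) - (i : ℝ)) :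
    ∀ k : ℕ, ∀ i ∈ Set.Icc 1 n, ∀ t : ℝ, 0 ≤ t → t < 1 →
      T^[k] ((i:ℝ) - 1 + t) = ((σ^[k] i : ℕ):ℝ) - 1 + Int.fract (t - k * α) := by
  intro k
  induction k with
  | zero =>
    intro i hi t ht0 ht1
    simp [Int.fract_eq_self.mpr ⟨ht0, ht1⟩]
  | succ k ih =>
    intro i hi t ht0 ht1
    rw [Function.iterate_succ_apply', ih i hi t ht0 ht1]
    have hmem := iter_mem n σ hσ k i hi
    have hstep := T_step n σ α T hα hT (σ^[k] i) hmem (Int.fract (t - k * α))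
      (Int.fract_nonneg _) (Int.fract_lt_one _)
    rw [hstep]
    congr 1
    · rw [Function.iterate_succ_apply']
    · have h1 : Int.fract (t - k * α) - α = (t - (k+1) * α) - (⌊t - k * α⌋ : ℤ) := by
        rw [Int.fract]; ring
      rw [h1, Int.fract_sub_intCast]
      norm_num

end Aux



/-- If σ is an n-cycle, then the first return map of the
2n-interval exchange T of Section 4 to [0,1) is the rotation
x ↦ x + n(1-α) (mod 1), and T is minimal. -/
theorem stmt_13
    (n : ℕ) (hn : 1 ≤ n) (σ : ℕ → ℕ)
    (hσ : Set.BijOn σ (Set.Icc 1 n) (Set.Icc 1 n))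
    (α : ℝ) (hα : α ∈ Set.Ioo (0 : ℝ) 1) (hirr : Irrational α)
    (T : ℝ → ℝ)
    (hT : ∀ i ∈ Set.Icc 1 n, ∀ x ∈ Set.Ico ((i : ℝ) - 1) (i : ℝ),
      T x = if x < (i : ℝ) - 1 + α then x + 1 - α + (σ i : ℝ) - (i : ℝ)
            else x - α + (σ i : ℝ) - (i : ℝ))
    (hcyc : ∀ j ∈ Set.Icc 1 n, ∃ k : ℕ, σ^[k] 1 = j) :
    (∀ x ∈ Set.Ico (0 : ℝ) 1,
      (∀ k : ℕ, 1 ≤ k → k < n → T^[k] x ∉ Set.Ico (0 : ℝ) 1) ∧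
      T^[n] x ∈ Set.Ico (0 : ℝ) 1 ∧
      T^[n] x = Int.fract (x + (n : ℝ) * (1 - α))) ∧
    ∀ x ∈ Set.Ico (0 : ℝ) (n : ℝ),
      Set.Ico (0 : ℝ) (n : ℝ) ⊆ closure {y | ∃ k : ℕ, T^[k] x = y} := by
  have h1mem : (1 : ℕ) ∈ Set.Icc 1 n := ⟨le_refl 1, hn⟩
  have hiter := T_iter n σ α T hα hσ hT
  constructor
  · -- first return map
    intro x hx
    have hx1 : ((1:ℕ):ℝ) - 1 + x = x := by norm_num
    have hform : ∀ k : ℕ, T^[k] x = ((σ^[k] 1 : ℕ):ℝ) - 1 + Int.fract (x - k * α) := by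
      intro k
      have h := hiter k 1 h1mem x hx.1 hx.2
      rw [hx1] at h
      exact h
    refine ⟨?_, ?_, ?_⟩
    · intro k hk1 hkn hmem
      have hne := per_ne n σ hn hcyc hk1 hkn
      have hin := iter_mem n σ hσ k 1 h1mem
      have h2 : 2 ≤ σ^[k] 1 := by
        rcases hin with ⟨hl, _⟩; omega
      have h2' : (2:ℝ) ≤ ((σ^[k] 1 : ℕ):ℝ) := by exact_mod_cast h2
      have := Int.fract_nonneg (x - k * α)
      have := hmem.2
      rw [hform k] at this
      linarith
    · rw [hform n, per_n n σ hn hσ hcyc]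
      push_cast
      exact ⟨by simpa using Int.fract_nonneg (x - n * α),
        by simpa using Int.fract_lt_one (x - n * α)⟩
    · rw [hform n, per_n n σ hn hσ hcyc]
      have he : x + (n:ℝ) * (1 - α) = (x - n * α) + ((n:ℤ):ℝ) := by push_cast; ring
      rw [he, Int.fract_add_intCast]
      push_cast
      ring
  · -- minimality
    intro x hx y hy
    rw [Metric.mem_closure_iff]
    intro ε hε
    -- decompose x
    have hfx0 : 0 ≤ ⌊x⌋ := Int.floor_nonneg.mpr hx.1
    have hfxn : ⌊x⌋ < (n:ℤ) := by
      rw [Int.floor_lt]; exact_mod_cast hx.2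
    set ix : ℕ := ⌊x⌋.toNat with hix
    have hixz : (ix:ℤ) = ⌊x⌋ := Int.toNat_of_nonneg hfx0
    have hi : ix + 1 ∈ Set.Icc 1 n := ⟨by omega, by omega⟩
    set t : ℝ := Int.fract x with ht
    have hxdec : x = ((ix + 1 : ℕ):ℝ) - 1 + t := by
      have h1 : ((ix:ℕ):ℝ) = ((⌊x⌋:ℤ):ℝ) := by exact_mod_cast hixz
      have h2 := Int.floor_add_fract x
      push_cast
      push_cast at h1
      linarith
    -- decompose y
    have hfy0 : 0 ≤ ⌊y⌋ := Int.floor_nonneg.mpr hy.1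
    have hfyn : ⌊y⌋ < (n:ℤ) := by
      rw [Int.floor_lt]; exact_mod_cast hy.2
    set jx : ℕ := ⌊y⌋.toNat with hjx
    have hjxz : (jx:ℤ) = ⌊y⌋ := Int.toNat_of_nonneg hfy0
    have hjmem : jx + 1 ∈ Set.Icc 1 n := ⟨by omega, by omega⟩
    set s : ℝ := Int.fract y with hs
    have hydec : y = ((jx + 1 : ℕ):ℝ) - 1 + s := by
      have h1 : ((jx:ℕ):ℝ) = ((⌊y⌋:ℤ):ℝ) := by exact_mod_cast hjxz
      have h2 := Int.floor_add_fract y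
      push_cast
      push_cast at h1
      linarith
    have hs0 : 0 ≤ s := Int.fract_nonneg y
    have hs1 : s < 1 := Int.fract_lt_one y
    -- shifted target
    set s' : ℝ := s + min (ε/2) ((1-s)/2) with hs'
    have hmin0 : 0 < min (ε/2) ((1-s)/2) := lt_min (by linarith) (by linarith)
    have hs'0 : 0 < s' := by have := hmin0; rw [hs']; linarith
    have hs'1 : s' < 1 := by
      have : min (ε/2) ((1-s)/2) ≤ (1-s)/2 := min_le_right _ _
      rw [hs']; linarith
    have hs's : |s' - s| ≤ ε/2 := by
      rw [hs', abs_of_pos (by linarith)]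
      have := min_le_left (ε/2) ((1-s)/2)
      linarith
    set ε₂ : ℝ := min (ε/4) (min s' (1-s')) with hε₂def
    have hε₂ : 0 < ε₂ := lt_min (by linarith) (lt_min hs'0 (by linarith))
    have hε₂s' : ε₂ ≤ s' := le_trans (min_le_right _ _) (min_le_left _ _)
    have hε₂s'' : ε₂ ≤ 1 - s' := le_trans (min_le_right _ _) (min_le_right _ _)
    have hε₂ε : ε₂ ≤ ε/4 := min_le_left _ _
    -- β and small step
    set β : ℝ := (n:ℝ) * α with hβdef
    have hβ : Irrational β := hirr.natCast_mul (by omega)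
    obtain ⟨N, hN⟩ := exists_nat_gt (1/ε₂)
    have hNpos : 0 < N + 1 := Nat.succ_pos N
    obtain ⟨p, M, hM0, hMle, hMp⟩ := Real.exists_int_int_abs_mul_sub_le β hNpos
    have hsmall : |(M:ℝ) * β - p| < ε₂ := by
      have hb : (1:ℝ) / (↑(N+1) + 1) < ε₂ := by
        rw [div_lt_iff₀ (by positivity)]
        have h1 : 1 < (N:ℝ) * ε₂ := by
          have := (div_lt_iff₀ hε₂).mp hN
          linarith
        push_cast
        nlinarith
      exact lt_of_le_of_lt hMp hb
    set Mn : ℕ := M.toNat with hMn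
    have hMnz : (Mn:ℤ) = M := Int.toNat_of_nonneg hM0.le
    have hMnpos : Mn ≠ 0 := by omega
    set η : ℝ := (Mn:ℝ) * β - p with hηdef
    have hηM : η = (M:ℝ) * β - p := by
      rw [hηdef]
      congr 2
      exact_mod_cast hMnz
    have hηne : η ≠ 0 := by
      intro h
      have hirr2 : Irrational ((Mn:ℝ) * β) := hβ.natCast_mul hMnpos
      apply hirr2.ne_int p
      rw [hηdef] at h
      linarith
    have hηlt : |η| < ε₂ := by rw [hηM]; exact hsmall
    -- cycle combinatorics
    obtain ⟨a, ha⟩ := hcyc (ix + 1) hi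
    obtain ⟨b, hb⟩ := hcyc (jx + 1) hjmem
    have hσn : σ^[n] 1 = 1 := per_n n σ hn hσ hcyc
    set k0 : ℕ := b + (n - a % n) with hk0def
    have hk0 : ∀ m : ℕ, σ^[k0 + m*n] (ix + 1) = jx + 1 := by
      intro m
      set q : ℕ := a / n with hq
      set r : ℕ := a % n with hr
      have hqr : n*q + r = a := Nat.div_add_mod a n
      have hrn : r < n := Nat.mod_lt a (by omega)
      have harith : (k0 + m*n) + a = b + n*(q + m + 1) := by
        have hR : n*(q + m + 1) = n*q + m*n + n := by ring
        rw [hR, hk0def, ← hqr]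
        have hA : n - r + r = n := by omega
        zify
        push_cast [Nat.cast_sub hrn.le]
        ring
      rw [← ha, ← Function.iterate_add_apply, harith, Function.iterate_add_apply,
        per_mul σ hσn, hb]
    -- key step
    set c : ℝ := t - (k0:ℝ) * α with hc
    obtain ⟨jk, l, hjl⟩ := key_step η hηne (c - s')
    set k : ℕ := k0 + (jk * Mn) * n with hk
    have hσk : σ^[k] (ix + 1) = jx + 1 := hk0 (jk * Mn)
    -- orbit point
    have horbit : T^[k] x = ((jx + 1 : ℕ):ℝ) - 1 + Int.fract (t - k * α) := by
      rw [hxdec, hiter k (ix+1) hi t (Int.fract_nonneg x) (Int.fract_lt_one x), hσk]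
    have hfr1 : t - (k:ℝ) * α = (c - jk * η) - (((jk:ℤ) * p : ℤ):ℝ) := by
      rw [hc, hk, hηdef, hβdef]
      push_cast
      ring
    set rr : ℝ := (c - s') - jk*η - l with hrr
    have hrrlt : |rr| < ε₂ := lt_trans hjl hηlt
    have hfr2 : c - jk * η = (l:ℝ) + (s' + rr) := by rw [hrr]; ring
    have hfract : Int.fract (t - (k:ℝ) * α) = s' + rr := by
      rw [hfr1, Int.fract_sub_intCast, hfr2, Int.fract_intCast_add, Int.fract_eq_self]
      rw [abs_lt] at hrrlt
      constructor <;> linarith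
    refine ⟨T^[k] x, ⟨k, rfl⟩, ?_⟩
    have habs : dist y (T^[k] x) = |s - s' - rr| := by
      rw [horbit, hfract, Real.dist_eq, hydec]
      congr 1
      push_cast
      ring
    have h1 : |s - s' - rr| ≤ |s' - s| + |rr| := by
      calc |s - s' - rr| ≤ |s - s'| + |rr| := abs_sub _ _
      _ = |s' - s| + |rr| := by rw [abs_sub_comm]
    have h2 : |rr| < ε₂ := lt_trans hjl hηlt
    rw [habs]
    linarith [hs's, h2, hε₂ε, hε]
end

section
/- Let n ≥ 1, σ an n-cycle of {1,...,n}, α ∈ (0,1) irrational, and T the 2n-interval exchange on [0,n) with T([i−1,i)) = [σ(i)−1, σ(i)) as defined by T(x) = x + 1 − α + σ(i) − i on [i−1, i−1+α) and T(x) = x − α + σ(i) − i on [i−1+α, i). For each i let k_i ∈ {0,...,n−1} be such that [i−1,i) = T^{k_i}([0,1)). Then the piecewise constant function φ(x) = exp(2πi k_i/n) for x ∈ [i−1,i) satisfies φ(T(x)) = exp(2πi/n) φ(x) for all x; hence exp(2πi/n) is a rational eigenvalue of U_T. -/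
/-- Lemma 4.2 b: If σ is an n-cycle, writing
[i-1,i) = T^[k_i]([0,1)), the piecewise constant function
φ(x) = exp(2πi k_i/n) on [i-1,i) satisfies φ∘T = exp(2πi/n)·φ, so
exp(2πi/n) is a rational eigenvalue of U_T. -/
theorem stmt_16
    (n : ℕ) (hn : 1 ≤ n) (σ : ℕ → ℕ)
    (hσ : Set.BijOn σ (Set.Icc 1 n) (Set.Icc 1 n))
    (α : ℝ) (hα : α ∈ Set.Ioo (0 : ℝ) 1) (hirr : Irrational α)
    (T : ℝ → ℝ)
    (hT : ∀ i ∈ Set.Icc 1 n, ∀ x ∈ Set.Ico ((i : ℝ) - 1) (i : ℝ),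
      T x = if x < (i : ℝ) - 1 + α then x + 1 - α + (σ i : ℝ) - (i : ℝ)
            else x - α + (σ i : ℝ) - (i : ℝ))
    (hcyc : ∀ j ∈ Set.Icc 1 n, ∃ k : ℕ, σ^[k] 1 = j)
    (k : ℕ → ℕ)
    (hk : ∀ i ∈ Set.Icc 1 n, k i < n ∧
      Set.Ico ((i : ℝ) - 1) (i : ℝ) = T^[k i] '' Set.Ico (0 : ℝ) 1)
    (φ : ℝ → ℂ)
    (hφ : ∀ i ∈ Set.Icc 1 n, ∀ x ∈ Set.Ico ((i : ℝ) - 1) (i : ℝ),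
      φ x = Complex.exp (2 * Real.pi * Complex.I * (k i : ℂ) / (n : ℂ))) :
    ∀ x ∈ Set.Ico (0 : ℝ) (n : ℝ),
      φ (T x) = Complex.exp (2 * Real.pi * Complex.I / (n : ℂ)) * φ x := by
  obtain ⟨hα0, hα1⟩ := hα
  -- intervals determine their index
  have hIntInj : ∀ i ∈ Set.Icc 1 n, ∀ j ∈ Set.Icc 1 n,
      Set.Ico ((i:ℝ)-1) (i:ℝ) = Set.Ico ((j:ℝ)-1) (j:ℝ) → i = j := by
    intro i hi j hj h
    have h1 : ((i:ℝ)-1) ∈ Set.Ico ((j:ℝ)-1) (j:ℝ) := by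
      rw [← h]; exact ⟨le_refl _, by linarith⟩
    have h2 : ((j:ℝ)-1) ∈ Set.Ico ((i:ℝ)-1) (i:ℝ) := by
      rw [h]; exact ⟨le_refl _, by linarith⟩
    have : (i:ℝ) = (j:ℝ) := by
      have := h1.1; have := h2.1; linarith
    exact_mod_cast this
  -- image of an interval under T
  have himg : ∀ i ∈ Set.Icc 1 n,
      T '' Set.Ico ((i:ℝ)-1) (i:ℝ) = Set.Ico ((σ i:ℝ)-1) (σ i : ℝ) := by
    intro i hi
    ext y
    constructor
    · rintro ⟨x, hx, rfl⟩
      obtain ⟨hx1, hx2⟩ := hx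
      rw [hT i hi x ⟨hx1, hx2⟩]
      split_ifs with h
      · exact ⟨by linarith, by linarith⟩
      · push_neg at h
        exact ⟨by linarith, by linarith⟩
    · rintro ⟨hy1, hy2⟩
      by_cases hcase : (σ i : ℝ) - α ≤ y
      · refine ⟨y - 1 + α - σ i + i, ⟨by linarith, by linarith⟩, ?_⟩
        rw [hT i hi _ ⟨by linarith, by linarith⟩, if_pos (by linarith)]
        ring
      · push_neg at hcase
        refine ⟨y + α - σ i + i, ⟨by linarith, by linarith⟩, ?_⟩
        rw [hT i hi _ ⟨by linarith, by linarith⟩, if_neg (by push_neg; linarith)]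
        ring
  -- k is injective
  have hkinj : ∀ i ∈ Set.Icc 1 n, ∀ j ∈ Set.Icc 1 n, k i = k j → i = j := by
    intro i hi j hj h
    apply hIntInj i hi j hj
    rw [(hk i hi).2, (hk j hj).2, h]
  -- k is surjective onto range n
  have hksur : ∀ m, m < n → ∃ i ∈ Set.Icc 1 n, k i = m := by
    intro m hm
    have hcard : (Finset.range n).card ≤ (Finset.Icc 1 n).card := by
      simp [Nat.card_Icc]
    obtain ⟨a, ha, hka⟩ := Finset.surj_on_of_inj_on_of_card_le
      (s := Finset.Icc 1 n) (t := Finset.range n)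
      (fun a _ => k a)
      (fun a ha => Finset.mem_range.mpr (hk a (by
        simp only [Finset.mem_Icc] at ha; exact ha)).1)
      (fun a b ha hb hab => hkinj a (by
        simp only [Finset.mem_Icc] at ha; exact ha) b (by
        simp only [Finset.mem_Icc] at hb; exact hb) hab)
      hcard m (Finset.mem_range.mpr hm)
    refine ⟨a, ?_, hka.symm⟩
    simp only [Finset.mem_Icc] at ha; exact ha
  -- iterates of [0,1) are distinct for exponents < n
  have hiterinj : ∀ a b : ℕ, a < n → b < n →
      T^[a] '' Set.Ico (0:ℝ) 1 = T^[b] '' Set.Ico (0:ℝ) 1 → a = b := by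
    intro a b ha hb hab
    obtain ⟨i, hi, rfl⟩ := hksur a ha
    obtain ⟨j, hj, rfl⟩ := hksur b hb
    have hij : i = j := hIntInj i hi j hj (by rw [(hk i hi).2, (hk j hj).2, hab])
    rw [hij]
  -- orbit of 1 under σ realizes all values of k
  have horb : ∀ m, m < n → σ^[m] 1 ∈ Set.Icc 1 n ∧ k (σ^[m] 1) = m := by
    intro m
    induction m with
    | zero =>
      intro _
      have h1 : (1:ℕ) ∈ Set.Icc 1 n := Set.mem_Icc.mpr ⟨le_refl 1, hn⟩
      refine ⟨by simpa using h1, ?_⟩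
      have hEq : T^[k 1] '' Set.Ico (0:ℝ) 1 = T^[0] '' Set.Ico (0:ℝ) 1 := by
        simp only [Function.iterate_zero, Set.image_id]
        rw [← (hk 1 h1).2]
        norm_num
      simpa using hiterinj (k 1) 0 (hk 1 h1).1 (by omega) hEq
    | succ m ih =>
      intro hm
      have hmn : m < n := by omega
      obtain ⟨hmem, hkm⟩ := ih hmn
      have hσmem : σ (σ^[m] 1) ∈ Set.Icc 1 n := hσ.mapsTo hmem
      rw [Function.iterate_succ_apply']
      refine ⟨hσmem, ?_⟩
      have hEq : T^[m+1] '' Set.Ico (0:ℝ) 1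
          = T^[k (σ (σ^[m] 1))] '' Set.Ico (0:ℝ) 1 := by
        calc T^[m+1] '' Set.Ico (0:ℝ) 1
            = T '' (T^[m] '' Set.Ico (0:ℝ) 1) := by
              rw [Function.iterate_succ', Set.image_comp]
          _ = T '' Set.Ico ((σ^[m] 1 : ℝ)-1) (σ^[m] 1 : ℝ) := by
              have h := (hk _ hmem).2
              rw [hkm] at h
              rw [← h]
          _ = Set.Ico ((σ (σ^[m] 1) : ℝ)-1) (σ (σ^[m] 1) : ℝ) := himg _ hmem
          _ = T^[k (σ (σ^[m] 1))] '' Set.Ico (0:ℝ) 1 := (hk _ hσmem).2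
      exact hiterinj _ _ (hk _ hσmem).1 hm hEq.symm
  -- the key step: k (σ i) = (k i + 1) % n
  have hstep : ∀ i ∈ Set.Icc 1 n, k (σ i) = (k i + 1) % n := by
    intro i hi
    have hki : k i < n := (hk i hi).1
    have hio : i = σ^[k i] 1 := hkinj i hi _ (horb _ hki).1 ((horb _ hki).2).symm
    by_cases hlt : k i + 1 < n
    · rw [Nat.mod_eq_of_lt hlt]
      have h2 := (horb _ hlt).2
      rw [Function.iterate_succ_apply'] at h2
      calc k (σ i) = k (σ (σ^[k i] 1)) := by rw [← hio]
        _ = k i + 1 := h2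
    · have hkin : k i + 1 = n := by omega
      rw [hkin, Nat.mod_self]
      have hσi : σ i ∈ Set.Icc 1 n := hσ.mapsTo hi
      set m := k (σ i) with hmdef
      have hm : m < n := (hk _ hσi).1
      have h1 : σ i = σ^[m] 1 := hkinj _ hσi _ (horb _ hm).1 ((horb _ hm).2).symm
      by_contra hne
      have hm0 : 0 < m := Nat.pos_of_ne_zero hne
      have hm1 : m - 1 < n := by omega
      have hsplit : σ^[m] 1 = σ (σ^[m-1] 1) := by
        conv_lhs => rw [show m = (m-1)+1 by omega]
        rw [Function.iterate_succ_apply']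
      have hinj := hσ.injOn ((horb _ hki).1) ((horb _ hm1).1)
        (by rw [← hio, h1]; exact hsplit)
      have : k i = m - 1 := by
        have e1 := (horb _ hki).2
        have e2 := (horb _ hm1).2
        rw [hinj] at e1
        omega
      omega
  -- main argument
  intro x hx
  obtain ⟨hx0, hxn⟩ := hx
  set i : ℕ := ⌊x⌋.toNat + 1 with hidef
  have hfloorZ : (⌊x⌋.toNat : ℤ) = ⌊x⌋ := Int.toNat_of_nonneg (Int.floor_nonneg.mpr hx0)
  have hfloor : (⌊x⌋.toNat : ℝ) = (⌊x⌋ : ℝ) := by exact_mod_cast hfloorZ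
  have hi1 : ((i:ℝ) - 1) = (⌊x⌋ : ℝ) := by
    rw [hidef]; push_cast [hfloor]; ring
  have hxmem : x ∈ Set.Ico ((i:ℝ)-1) (i:ℝ) := by
    constructor
    · rw [hi1]; exact Int.floor_le x
    · have := Int.lt_floor_add_one x
      have h2 : (i:ℝ) = (⌊x⌋:ℝ) + 1 := by linarith [hi1]
      rw [h2]; exact this
  have hi : i ∈ Set.Icc 1 n := by
    constructor
    · omega
    · have h3 : (i:ℝ) - 1 < n := lt_of_le_of_lt hxmem.1 hxn
      have h4 : (i:ℝ) < (n:ℝ) + 1 := by linarith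
      have h5 : i < n + 1 := by exact_mod_cast h4
      omega
  have hσi : σ i ∈ Set.Icc 1 n := hσ.mapsTo hi
  have hTx : T x ∈ Set.Ico ((σ i:ℝ)-1) (σ i:ℝ) := by
    rw [← himg i hi]; exact Set.mem_image_of_mem T hxmem
  rw [hφ (σ i) hσi (T x) hTx, hφ i hi x hxmem, hstep i hi]
  rw [← Complex.exp_add]
  set r := (k i + 1) % n with hrdef
  set q := (k i + 1) / n with hqdef
  have hn' : (n:ℂ) ≠ 0 := Nat.cast_ne_zero.mpr (by omega)
  have hmod : ((k i : ℂ) + 1) = (r:ℂ) + (n:ℂ) * (q:ℂ) := by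
    have := (Nat.mod_add_div (k i + 1) n).symm
    exact_mod_cast congrArg (Nat.cast : ℕ → ℂ) this
  have harg : 2 * (Real.pi:ℂ) * Complex.I / (n:ℂ)
        + 2 * (Real.pi:ℂ) * Complex.I * ((k i : ℕ) : ℂ) / (n:ℂ)
      = 2 * (Real.pi:ℂ) * Complex.I * ((r:ℕ) : ℂ) / (n:ℂ)
        + (q:ℕ) * (2 * (Real.pi:ℂ) * Complex.I) := by
    field_simp
    linear_combination hmod
  rw [harg, Complex.exp_add, Complex.exp_nat_mul_two_pi_mul_I, mul_one]
end
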